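/- Let f ∈ ℝ[X_1,...,X_n, Y_1, Y_{21},...,Y_{2r}] with deg_{Y_1} f = m even and deg in the Y_2-variables equal to 2. If f is positive on S × ℝ^{r+1} and f satisfies condition (‡) on S, then the bihomogenization f̿ of f with respect to Y_1 (with variable Z_1) and to the Y_2-variables (with variable Z_2), separately, is positive on S × C × C^r, where C = {(y,z) ∈ ℝ^2 : y^2 + z^2 = 1} and C^r = {(ȳ,z) ∈ ℝ^{r+1} : |ȳ|^2 + z^2 = 1}. -/

import Mathlib

open MvPolynomial

/-- Variables: `X` via `Sum.inl`, `Y₁` via `Sum.inr (Sum.inl ())`, `Y₂` via `Sum.inr (Sum.inr j)`. -/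
abbrev σvars (n r : ℕ) := Fin n ⊕ (Unit ⊕ Fin r)

noncomputable def degY1 {n r : ℕ} (f : MvPolynomial (σvars n r) ℝ) : ℕ :=
  f.support.sup fun s => s (Sum.inr (Sum.inl ()))

noncomputable def degY2 {n r : ℕ} (f : MvPolynomial (σvars n r) ℝ) : ℕ :=
  f.support.sup fun s => ∑ j, s (Sum.inr (Sum.inr j))

/-- Evaluation of the bihomogenization `f̿ = Σ f_{i,β}(X) Y₁^i Z₁^{m-i} Y₂^β Z₂^{2-|β|}`. -/
noncomputable def bihomval {n r : ℕ} (f : MvPolynomial (σvars n r) ℝ) (m : ℕ)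
    (x : Fin n → ℝ) (y₁ z₁ : ℝ) (y₂ : Fin r → ℝ) (z₂ : ℝ) : ℝ :=
  ∑ s ∈ f.support, f.coeff s * (∏ i, x i ^ s (Sum.inl i))
    * y₁ ^ s (Sum.inr (Sum.inl ())) * z₁ ^ (m - s (Sum.inr (Sum.inl ())))
    * (∏ j, y₂ j ^ s (Sum.inr (Sum.inr j))) * z₂ ^ (2 - ∑ j, s (Sum.inr (Sum.inr j)))

/-- `Σ_{|β|≤2} f_{m,β}(x) y₂^β`  (the coefficient of `Y₁^m`). -/
noncomputable def topY1val {n r : ℕ} (f : MvPolynomial (σvars n r) ℝ) (m : ℕ)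
    (x : Fin n → ℝ) (y₂ : Fin r → ℝ) : ℝ :=
  ∑ s ∈ f.support.filter (fun s => s (Sum.inr (Sum.inl ())) = m),
    f.coeff s * (∏ i, x i ^ s (Sum.inl i)) * (∏ j, y₂ j ^ s (Sum.inr (Sum.inr j)))

/-- `Σ_{|β|=2} f_{m,β}(x) y₂^β`. -/
noncomputable def topY1Y2val {n r : ℕ} (f : MvPolynomial (σvars n r) ℝ) (m : ℕ)
    (x : Fin n → ℝ) (y₂ : Fin r → ℝ) : ℝ :=
  ∑ s ∈ f.support.filter
      (fun s => s (Sum.inr (Sum.inl ())) = m ∧ (∑ j, s (Sum.inr (Sum.inr j))) = 2),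
    f.coeff s * (∏ i, x i ^ s (Sum.inl i)) * (∏ j, y₂ j ^ s (Sum.inr (Sum.inr j)))

/-- `Σ_{0≤i≤m} Σ_{|β|=2} f_{i,β}(x) y₁^i y₂^β`. -/
noncomputable def topY2val {n r : ℕ} (f : MvPolynomial (σvars n r) ℝ)
    (x : Fin n → ℝ) (y₁ : ℝ) (y₂ : Fin r → ℝ) : ℝ :=
  ∑ s ∈ f.support.filter (fun s => (∑ j, s (Sum.inr (Sum.inr j))) = 2),
    f.coeff s * (∏ i, x i ^ s (Sum.inl i)) * y₁ ^ s (Sum.inr (Sum.inl ()))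
      * (∏ j, y₂ j ^ s (Sum.inr (Sum.inr j)))

lemma eval_expand {n r : ℕ} (f : MvPolynomial (σvars n r) ℝ) (x : Fin n → ℝ) (a : ℝ)
    (b : Fin r → ℝ) :
    eval (Sum.elim x (Sum.elim (fun _ => a) b)) f
      = ∑ s ∈ f.support, f.coeff s * (∏ i, x i ^ s (Sum.inl i))
          * a ^ s (Sum.inr (Sum.inl ())) * ∏ j, b j ^ s (Sum.inr (Sum.inr j)) := by
  rw [eval_eq']
  refine Finset.sum_congr rfl fun s _ => ?_
  rw [Fintype.prod_sum_type]
  simp only [Sum.elim_inl, Sum.elim_inr]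
  rw [Fintype.prod_sum_type]
  simp only [Sum.elim_inl, Sum.elim_inr, Finset.univ_unique, Finset.prod_singleton]
  ring

/-- if `f` is positive on `S × ℝ^{r+1}`, `deg_{Y₁} f = m` even, `deg_{Y₂} f = 2`,
and `f` satisfies condition (‡) on `S`, then `f̿` is positive on `S × C × C^r`. -/
theorem stmt3 {n r : ℕ} (f : MvPolynomial (σvars n r) ℝ) (m : ℕ)
    (hm : degY1 f = m) (hmeven : Even m) (h2 : degY2 f = 2) (S : Set (Fin n → ℝ))
    (hpos : ∀ x ∈ S, ∀ (y₁ : ℝ) (y₂ : Fin r → ℝ),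
      0 < eval (Sum.elim x (Sum.elim (fun _ => y₁) y₂)) f)
    (hddag₁ : ∀ x ∈ S, ∀ y₂ : Fin r → ℝ, 0 < topY1val f m x y₂)
    (hddag₂ : ∀ x ∈ S, ∀ y₂ : Fin r → ℝ, y₂ ≠ 0 → 0 < topY1Y2val f m x y₂)
    (hddag₃ : ∀ x ∈ S, ∀ y₁ : ℝ, ∀ y₂ : Fin r → ℝ, y₂ ≠ 0 → 0 < topY2val f x y₁ y₂) :
    ∀ x ∈ S, ∀ (y₁ z₁ : ℝ), y₁ ^ 2 + z₁ ^ 2 = 1 →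
      ∀ (y₂ : Fin r → ℝ) (z₂ : ℝ), (∑ j, y₂ j ^ 2) + z₂ ^ 2 = 1 →
        0 < bihomval f m x y₁ z₁ y₂ z₂ := by
  intro x hx y₁ z₁ hc1 y₂ z₂ hc2
  have hile : ∀ s ∈ f.support, s (Sum.inr (Sum.inl ())) ≤ m := fun s hs => hm ▸
    Finset.le_sup (f := fun s => s (Sum.inr (Sum.inl ()))) hs
  have hble : ∀ s ∈ f.support, (∑ j, s (Sum.inr (Sum.inr j))) ≤ 2 := fun s hs => h2 ▸
    Finset.le_sup (f := fun s => ∑ j, s (Sum.inr (Sum.inr j))) hs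
  by_cases hz₁ : z₁ = 0
  · -- z₁ = 0 : y₁² = 1
    have hy1 : y₁ ^ 2 = 1 := by rw [hz₁] at hc1; simpa using hc1
    have hy1m : y₁ ^ m = 1 := by
      obtain ⟨k, hk⟩ := hmeven
      have : m = 2 * k := by omega
      rw [this, pow_mul, hy1, one_pow]
    by_cases hz₂ : z₂ = 0
    · -- z₁ = 0, z₂ = 0
      have hy₂ : y₂ ≠ 0 := by
        intro h; rw [h, hz₂] at hc2; simp at hc2
      have key : bihomval f m x y₁ z₁ y₂ z₂ = topY1Y2val f m x y₂ := by
        unfold bihomval topY1Y2val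
        rw [← Finset.sum_filter_of_ne (p := fun s =>
            s (Sum.inr (Sum.inl ())) = m ∧ (∑ j, s (Sum.inr (Sum.inr j))) = 2)]
        · refine Finset.sum_congr rfl fun s hs => ?_
          have hs' := (Finset.mem_filter.mp hs).2
          rw [hs'.1, hs'.2, Nat.sub_self, Nat.sub_self, pow_zero, pow_zero, hy1m]
          ring
        · intro s hs hne
          constructor
          · by_contra h
            have : m - s (Sum.inr (Sum.inl ())) ≠ 0 := by
              have := hile s hs; omega
            rw [hz₁, zero_pow this] at hne
            simp at hne
          · by_contra h
            have : 2 - (∑ j, s (Sum.inr (Sum.inr j))) ≠ 0 := by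
              have := hble s hs; omega
            rw [hz₂, zero_pow this] at hne
            simp at hne
      rw [key]
      exact hddag₂ x hx y₂ hy₂
    · -- z₁ = 0, z₂ ≠ 0
      have key : bihomval f m x y₁ z₁ y₂ z₂
          = z₂ ^ 2 * topY1val f m x (fun j => y₂ j / z₂) := by
        unfold bihomval topY1val
        rw [Finset.mul_sum,
          ← Finset.sum_filter_of_ne (p := fun s => s (Sum.inr (Sum.inl ())) = m)]
        · refine Finset.sum_congr rfl fun s hs => ?_
          have hsup : s ∈ f.support := Finset.mem_filter.mp hs |>.1
          have hs' := (Finset.mem_filter.mp hs).2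
          have hB := hble s hsup
          simp only [div_pow]
          rw [hs', Nat.sub_self, pow_zero, hy1m,
            Finset.prod_div_distrib, Finset.prod_pow_eq_pow_sum,
            pow_sub₀ z₂ hz₂ hB]
          field_simp
        · intro s hs hne
          by_contra h
          have : m - s (Sum.inr (Sum.inl ())) ≠ 0 := by
            have := hile s hs; omega
          rw [hz₁, zero_pow this] at hne
          simp at hne
      rw [key]
      exact mul_pos (by positivity) (hddag₁ x hx _)
  · by_cases hz₂ : z₂ = 0
    · -- z₁ ≠ 0, z₂ = 0
      have hy₂ : y₂ ≠ 0 := by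
        intro h; rw [h, hz₂] at hc2; simp at hc2
      have key : bihomval f m x y₁ z₁ y₂ z₂
          = z₁ ^ m * topY2val f x (y₁ / z₁) y₂ := by
        unfold bihomval topY2val
        rw [Finset.mul_sum,
          ← Finset.sum_filter_of_ne (p := fun s => (∑ j, s (Sum.inr (Sum.inr j))) = 2)]
        · refine Finset.sum_congr rfl fun s hs => ?_
          have hsup : s ∈ f.support := Finset.mem_filter.mp hs |>.1
          have hs' := (Finset.mem_filter.mp hs).2
          have hI := hile s hsup
          rw [hs', Nat.sub_self, pow_zero, div_pow, pow_sub₀ z₁ hz₁ hI]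
          field_simp
        · intro s hs hne
          by_contra h
          have : 2 - (∑ j, s (Sum.inr (Sum.inr j))) ≠ 0 := by
            have := hble s hs; omega
          rw [hz₂, zero_pow this] at hne
          simp at hne
      rw [key]
      exact mul_pos (Even.pow_pos hmeven hz₁) (hddag₃ x hx _ y₂ hy₂)
    · -- z₁ ≠ 0, z₂ ≠ 0
      have key : bihomval f m x y₁ z₁ y₂ z₂
          = z₁ ^ m * z₂ ^ 2 *
            eval (Sum.elim x (Sum.elim (fun _ => y₁ / z₁) (fun j => y₂ j / z₂))) f := by
        rw [_root_.eval_expand]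
        unfold bihomval
        rw [Finset.mul_sum]
        refine Finset.sum_congr rfl fun s hs => ?_
        have hI := hile s hs
        have hB := hble s hs
        simp only [div_pow]
        rw [Finset.prod_div_distrib, Finset.prod_pow_eq_pow_sum,
          pow_sub₀ z₁ hz₁ hI, pow_sub₀ z₂ hz₂ hB]
        field_simp
      rw [key]
      exact mul_pos (mul_pos (Even.pow_pos hmeven hz₁) (by positivity)) (hpos x hx _ _)
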